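/- Let S be a diagonal matrix with nonnegative entries (a sum of subsampling operators) such that every diagonal entry of the symmetrization Sym S (averaging entries at frequency k and −k) is strictly positive, and let 𝓕 be the unitary discrete Fourier transform. Then T := Re(𝓕* S 𝓕) = 𝓕* (Sym S) 𝓕 restricted to real vectors is symmetric positive definite, hence invertible. -/

import Mathlib

open Matrix Real


noncomputable def eC (n : ℕ) (m : ℤ) : ℂ :=
  Complex.exp (2 * (π : ℂ) * Complex.I * (m : ℂ) / (n : ℂ))

lemma eC_add (n : ℕ) (a b : ℤ) : eC n (a + b) = eC n a * eC n b := by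
  rw [eC, eC, eC, ← Complex.exp_add]
  congr 1
  push_cast
  ring

lemma eC_zero (n : ℕ) : eC n 0 = 1 := by simp [eC]

lemma eC_conj (n : ℕ) (m : ℤ) : (starRingEnd ℂ) (eC n m) = eC n (-m) := by
  rw [eC, eC, ← Complex.exp_conj]
  congr 1
  simp only [map_div₀, _root_.map_mul, Complex.conj_I, Complex.conj_ofReal, map_ofNat,
    Complex.conj_natCast, Int.cast_neg, map_intCast]
  ring

lemma eC_nmul (n : ℕ) [NeZero n] (t : ℤ) : eC n ((n : ℤ) * t) = 1 := by
  rw [eC]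
  have hn : (n : ℂ) ≠ 0 := Nat.cast_ne_zero.mpr (NeZero.ne n)
  have : 2 * (π : ℂ) * Complex.I * (((n : ℤ) * t : ℤ) : ℂ) / (n : ℂ)
      = (t : ℂ) * (2 * (π : ℂ) * Complex.I) := by
    push_cast
    field_simp
  rw [this, Complex.exp_int_mul_two_pi_mul_I]

lemma eC_periodic (n : ℕ) [NeZero n] {a b : ℤ} (h : (n : ℤ) ∣ (a - b)) :
    eC n a = eC n b := by
  obtain ⟨t, ht⟩ := h
  have : a = b + (n : ℤ) * t := by linarith
  rw [this, eC_add, eC_nmul, mul_one]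

lemma eC_pow (n : ℕ) (m : ℤ) (k : ℕ) : eC n (k * m) = (eC n m) ^ k := by
  induction k with
  | zero => simp [eC_zero]
  | succ k ih =>
    have : ((k : ℤ) + 1) * m = k * m + m := by ring
    push_cast
    rw [this, eC_add, ih, pow_succ]

lemma eC_eq_one_iff (n : ℕ) [NeZero n] (m : ℤ) : eC n m = 1 ↔ (n : ℤ) ∣ m := by
  constructor
  · intro h
    rw [eC, Complex.exp_eq_one_iff] at h
    obtain ⟨t, ht⟩ := h
    have hn : (n : ℂ) ≠ 0 := Nat.cast_ne_zero.mpr (NeZero.ne n)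
    have hπ : (π : ℂ) ≠ 0 := Complex.ofReal_ne_zero.mpr Real.pi_ne_zero
    have hI : Complex.I ≠ 0 := Complex.I_ne_zero
    have h2 : (2 : ℂ) * π * Complex.I ≠ 0 := by
      simp [hπ, hI, two_ne_zero]
    have hdiv : ((2:ℂ) * π * Complex.I) * ((m : ℂ) / n) = ((2:ℂ) * π * Complex.I) * t := by
      rw [mul_div_assoc] at ht
      rw [ht]
      ring
    have hq : (m : ℂ) / n = t := mul_left_cancel₀ h2 hdiv
    have hmc : (m : ℂ) = (n : ℂ) * t := by
      rw [div_eq_iff hn] at hq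
      rw [hq]; ring
    exact ⟨t, by exact_mod_cast hmc⟩
  · intro h
    obtain ⟨t, ht⟩ := h
    rw [ht, eC_nmul]

lemma eC_sum (n : ℕ) [NeZero n] (m : ℤ) :
    ∑ k : Fin n, eC n (k.val * m) = if (n : ℤ) ∣ m then (n : ℂ) else 0 := by
  by_cases h : (n : ℤ) ∣ m
  · simp only [h, if_true]
    have : ∀ k : Fin n, eC n (k.val * m) = 1 := by
      intro k
      rw [eC_pow, (eC_eq_one_iff n m).mpr h, one_pow]
    simp [this]
  · simp only [h, if_false]
    have hr : eC n m ≠ 1 := fun hc => h ((eC_eq_one_iff n m).mp hc)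
    have : ∑ k : Fin n, eC n (k.val * m) = ∑ k : Fin n, (eC n m) ^ (k : ℕ) := by
      refine Finset.sum_congr rfl fun k _ => ?_
      rw [eC_pow]
    rw [this, Fin.sum_univ_eq_sum_range (fun i => (eC n m) ^ i), geom_sum_eq hr]
    have : (eC n m) ^ n = 1 := by
      rw [← eC_pow, (eC_eq_one_iff n _).mpr ⟨m, by push_cast; ring⟩]
    rw [this]
    simp

lemma dft_entry (n : ℕ) [NeZero n] (F : Matrix (Fin n) (Fin n) ℂ)
    (hF : F = Matrix.of fun j k : Fin n => (1 / Real.sqrt n : ℂ) *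
      Complex.exp (-(2 * (π : ℂ) * Complex.I * (j.val : ℂ) * (k.val : ℂ)) / (n : ℂ)))
    (c : Fin n → ℂ) (a b : Fin n) :
    (Fᴴ * Matrix.diagonal c * F) a b
      = (n : ℂ)⁻¹ * ∑ k : Fin n, c k * eC n ((k.val : ℤ) * ((a.val : ℤ) - (b.val : ℤ))) := by
  have hFe : ∀ j k : Fin n, F j k = (1 / (Real.sqrt n : ℂ)) * eC n (-((j.val : ℤ) * (k.val : ℤ))) := by
    intro j k
    rw [hF]
    simp only [Matrix.of_apply, eC]
    congr 1
    push_cast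
    ring
  have hs : ((Real.sqrt n : ℝ) : ℂ) * ((Real.sqrt n : ℝ) : ℂ) = (n : ℂ) := by
    rw [← Complex.ofReal_mul, Real.mul_self_sqrt (Nat.cast_nonneg n)]
    norm_num
  have hsne : ((Real.sqrt n : ℝ) : ℂ) ≠ 0 := by
    intro h
    rw [h] at hs
    simp at hs
    exact Nat.cast_ne_zero.mpr (NeZero.ne n) hs.symm
  have key : (Fᴴ * Matrix.diagonal c * F) a b
      = ∑ j : Fin n, (starRingEnd ℂ) (F j a) * c j * F j b := by
    rw [Matrix.mul_apply]
    refine Finset.sum_congr rfl fun j _ => ?_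
    rw [Matrix.mul_diagonal, Matrix.conjTranspose_apply]
    rfl
  rw [key, Finset.mul_sum]
  refine Finset.sum_congr rfl fun j _ => ?_
  rw [hFe j a, hFe j b]
  rw [_root_.map_mul, eC_conj, neg_neg]
  have hconj : (starRingEnd ℂ) (1 / (Real.sqrt n : ℂ)) = 1 / (Real.sqrt n : ℂ) := by
    rw [map_div₀, _root_.map_one, Complex.conj_ofReal]
  rw [hconj]
  have heprod : eC n ((j.val : ℤ) * (a.val : ℤ)) * eC n (-((j.val : ℤ) * (b.val : ℤ)))
      = eC n ((j.val : ℤ) * ((a.val : ℤ) - (b.val : ℤ))) := by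
    rw [← eC_add]
    congr 1
    ring
  have hninv : (1 / (Real.sqrt n : ℂ)) * (1 / (Real.sqrt n : ℂ)) = (n : ℂ)⁻¹ := by
    rw [div_mul_div_comm, one_mul, hs, one_div]
  rw [← heprod, ← hninv]
  ring

lemma fin_dvd_iff (n : ℕ) [NeZero n] (a b : Fin n) :
    (n : ℤ) ∣ ((a.val : ℤ) - (b.val : ℤ)) ↔ a = b := by
  constructor
  · intro h
    have ha := a.isLt
    have hb := b.isLt
    have h0 : (a.val : ℤ) - (b.val : ℤ) = 0 := by
      refine Int.eq_zero_of_abs_lt_dvd h ?_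
      rw [abs_lt]
      omega
    exact Fin.ext (by omega)
  · rintro rfl
    simp

lemma dft_unitary (n : ℕ) [NeZero n] (F : Matrix (Fin n) (Fin n) ℂ)
    (hF : F = Matrix.of fun j k : Fin n => (1 / Real.sqrt n : ℂ) *
      Complex.exp (-(2 * (π : ℂ) * Complex.I * (j.val : ℂ) * (k.val : ℂ)) / (n : ℂ))) :
    Fᴴ * F = 1 := by
  have h1 : Fᴴ * F = Fᴴ * Matrix.diagonal (fun _ : Fin n => (1 : ℂ)) * F := by
    rw [Matrix.diagonal_one, Matrix.mul_one]
  rw [h1]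
  ext a b
  rw [dft_entry n F hF]
  have : ∀ k : Fin n, (1 : ℂ) * eC n ((k.val : ℤ) * ((a.val : ℤ) - (b.val : ℤ)))
      = eC n ((k.val : ℤ) * ((a.val : ℤ) - (b.val : ℤ))) := fun k => one_mul _
  simp only [this]
  rw [eC_sum]
  rw [Matrix.one_apply]
  by_cases hab : a = b
  · simp [hab, (fin_dvd_iff n b b).mpr rfl,
      inv_mul_cancel₀ (Nat.cast_ne_zero.mpr (NeZero.ne n) : (n:ℂ) ≠ 0)]
  · have : ¬ (n : ℤ) ∣ ((a.val : ℤ) - (b.val : ℤ)) := fun h => hab ((fin_dvd_iff n a b).mp h)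
    simp [hab, this]

lemma dft_mulVec_injective (n : ℕ) [NeZero n] (F : Matrix (Fin n) (Fin n) ℂ)
    (hF : F = Matrix.of fun j k : Fin n => (1 / Real.sqrt n : ℂ) *
      Complex.exp (-(2 * (π : ℂ) * Complex.I * (j.val : ℂ) * (k.val : ℂ)) / (n : ℂ)))
    (v : Fin n → ℂ) (hv : F.mulVec v = 0) : v = 0 := by
  have := congrArg (fun w => Fᴴ.mulVec w) hv
  simp only [Matrix.mulVec_mulVec, dft_unitary n F hF, Matrix.one_mulVec] at this
  simpa [Matrix.mulVec_zero] using this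

lemma fin_neg_val_dvd (n : ℕ) [NeZero n] (k : Fin n) :
    (n : ℤ) ∣ (((-k : Fin n).val : ℤ) + (k.val : ℤ)) := by
  have h : ((-k + k : Fin n)).val = ((-k : Fin n).val + k.val) % n := by
    rw [Fin.add_def]
  rw [neg_add_cancel] at h
  have h0 : (0 : Fin n).val = 0 := rfl
  have : ((-k : Fin n).val + k.val) % n = 0 := by rw [← h, h0]
  have hdvd : n ∣ ((-k : Fin n).val + k.val) := Nat.dvd_of_mod_eq_zero this
  exact_mod_cast Int.natCast_dvd_natCast.mpr hdvd

lemma sum_neg_reindex (n : ℕ) [NeZero n] (d : Fin n → ℝ) (m : ℤ) :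
    ∑ k : Fin n, (d (-k) : ℂ) * eC n ((k.val : ℤ) * m)
      = ∑ k : Fin n, (d k : ℂ) * eC n (-((k.val : ℤ) * m)) := by
  rw [← Equiv.sum_comp (Equiv.neg (Fin n))
    (fun k : Fin n => (d (-k) : ℂ) * eC n ((k.val : ℤ) * m))]
  refine Finset.sum_congr rfl fun k _ => ?_
  simp only [Equiv.neg_apply, neg_neg]
  congr 1
  apply eC_periodic
  have h1 := fin_neg_val_dvd n k
  have h2 : (((-k : Fin n).val : ℤ)) * m - (-((k.val : ℤ) * m))
      = ((((-k : Fin n).val : ℤ)) + (k.val : ℤ)) * m := by ring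
  rw [h2]
  exact Dvd.dvd.mul_right h1 m

lemma symm_entry (n : ℕ) [NeZero n] (F : Matrix (Fin n) (Fin n) ℂ)
    (hF : F = Matrix.of fun j k : Fin n => (1 / Real.sqrt n : ℂ) *
      Complex.exp (-(2 * (π : ℂ) * Complex.I * (j.val : ℂ) * (k.val : ℂ)) / (n : ℂ)))
    (d : Fin n → ℝ) (a b : Fin n) :
    (Fᴴ * Matrix.diagonal (fun k => (((d k + d (-k)) / 2 : ℝ) : ℂ)) * F) a b
      = ((((Fᴴ * Matrix.diagonal (fun k => (d k : ℂ)) * F) a b).re : ℝ) : ℂ) := by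
  rw [dft_entry n F hF, dft_entry n F hF]
  set m := (a.val : ℤ) - (b.val : ℤ) with hm
  set G := ∑ k : Fin n, (d k : ℂ) * eC n ((k.val : ℤ) * m) with hG
  have hsplit : ∑ k : Fin n, (((d k + d (-k)) / 2 : ℝ) : ℂ) * eC n ((k.val : ℤ) * m)
      = (G + ∑ k : Fin n, (d (-k) : ℂ) * eC n ((k.val : ℤ) * m)) / 2 := by
    rw [hG, ← Finset.sum_add_distrib, Finset.sum_div]
    refine Finset.sum_congr rfl fun k _ => ?_
    push_cast
    ring
  have hconjG : ∑ k : Fin n, (d (-k) : ℂ) * eC n ((k.val : ℤ) * m) = (starRingEnd ℂ) G := by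
    rw [sum_neg_reindex, hG, map_sum]
    refine Finset.sum_congr rfl fun k _ => ?_
    rw [_root_.map_mul, Complex.conj_ofReal, eC_conj]
  rw [hsplit, hconjG, Complex.add_conj]
  have hre : ((n : ℂ)⁻¹ * G).re = (n : ℝ)⁻¹ * G.re := by
    have : (n : ℂ)⁻¹ = (((n : ℝ)⁻¹ : ℝ) : ℂ) := by push_cast; ring
    rw [this, Complex.re_ofReal_mul]
  rw [hre]
  push_cast
  ring

/-- for the unitary DFT `𝓕` and a nonnegative diagonal subsampling matrix `S`
whose frequency-symmetrisation `Sym S` has strictly positive diagonal, the real matrix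
`T = Re(𝓕* S 𝓕)` agrees with `𝓕* (Sym S) 𝓕` on real vectors and is symmetric positive
definite, hence invertible. -/
theorem dft_subsampling_posdef
    (n : ℕ) [NeZero n]
    (F : Matrix (Fin n) (Fin n) ℂ)
    (hF : F = Matrix.of fun j k : Fin n => (1 / Real.sqrt n : ℂ) *
      Complex.exp (-(2 * (π : ℂ) * Complex.I * (j.val : ℂ) * (k.val : ℂ)) / (n : ℂ)))
    (d : Fin n → ℝ) (hd : ∀ k, 0 ≤ d k)
    (S : Matrix (Fin n) (Fin n) ℂ) (hS : S = Matrix.diagonal (fun k => (d k : ℂ)))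
    (hpos : ∀ k : Fin n, 0 < (d k + d (-k)) / 2)
    (SymS : Matrix (Fin n) (Fin n) ℂ)
    (hSymS : SymS = Matrix.diagonal (fun k => (((d k + d (-k)) / 2 : ℝ) : ℂ)))
    (T : Matrix (Fin n) (Fin n) ℝ)
    (hT : T = (Fᴴ * S * F).map Complex.re) :
    (∀ y : Fin n → ℝ,
      (Fᴴ * SymS * F).mulVec (fun i => (y i : ℂ)) = fun i => ((T.mulVec y i : ℝ) : ℂ))
    ∧ T.IsSymm ∧ T.PosDef ∧ IsUnit T.det := by
  subst hS hSymS hT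
  set SymS := Matrix.diagonal (fun k : Fin n => (((d k + d (-k)) / 2 : ℝ) : ℂ)) with hSymS
  set S := Matrix.diagonal (fun k : Fin n => ((d k : ℝ) : ℂ)) with hS
  set T := (Fᴴ * S * F).map Complex.re with hT
  -- the key entrywise identity
  have hMap : Fᴴ * SymS * F = T.map (fun r : ℝ => (r : ℂ)) := by
    ext a b
    rw [hSymS, symm_entry n F hF d a b]
    simp [hT, Matrix.map_apply]
    rfl
  -- Part 1
  have part1 : ∀ y : Fin n → ℝ,
      (Fᴴ * SymS * F).mulVec (fun i => (y i : ℂ)) = fun i => ((T.mulVec y i : ℝ) : ℂ) := by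
    intro y
    rw [hMap]
    funext i
    simp only [Matrix.mulVec, dotProduct, Matrix.map_apply]
    push_cast
    rfl
  -- Hermitian property of the complex matrix
  have hSymSH : SymSᴴ = SymS := by
    rw [hSymS, Matrix.diagonal_conjTranspose]
    have hv : (star fun k : Fin n => (((d k + d (-k)) / 2 : ℝ) : ℂ))
        = fun k : Fin n => (((d k + d (-k)) / 2 : ℝ) : ℂ) := by
      funext k
      simp only [Pi.star_apply, Complex.star_def, Complex.conj_ofReal]
    rw [hv]
  have hMH : (Fᴴ * SymS * F)ᴴ = Fᴴ * SymS * F := by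
    rw [Matrix.conjTranspose_mul, Matrix.conjTranspose_mul,
      Matrix.conjTranspose_conjTranspose, hSymSH, Matrix.mul_assoc]
  -- Part 2 : symmetry
  have part2 : T.IsSymm := by
    rw [Matrix.IsSymm]
    ext a b
    rw [Matrix.transpose_apply]
    have h1 : (Fᴴ * SymS * F) a b = (starRingEnd ℂ) ((Fᴴ * SymS * F) b a) := by
      conv_lhs => rw [← hMH]
      rfl
    rw [hMap] at h1
    simp only [Matrix.map_apply, Complex.conj_ofReal] at h1
    exact_mod_cast h1.symm
  -- Part 3 : positive definiteness
  have part3 : T.PosDef := by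
    have hherm : T.IsHermitian := by
      have h : Tᴴ = Tᵀ := by
        ext i j
        simp [Matrix.conjTranspose_apply]
      exact h.trans part2
    rw [Matrix.posDef_iff_dotProduct_mulVec]
    refine ⟨hherm, ?_⟩
    intro x hx
    set xc : Fin n → ℂ := fun i => (x i : ℂ) with hxcdef
    have hxc : xc ≠ 0 := by
      intro h
      apply hx
      funext i
      have h2 := congrFun h i
      have h3 : ((x i : ℝ) : ℂ) = 0 := h2
      exact_mod_cast h3
    set z : Fin n → ℂ := F.mulVec xc with hzdef
    have hz : z ≠ 0 := fun h => hxc (dft_mulVec_injective n F hF xc h)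
    -- step A
    have hA : star xc ⬝ᵥ (T.map (fun r : ℝ => (r : ℂ))).mulVec xc
        = ((x ⬝ᵥ T.mulVec x : ℝ) : ℂ) := by
      simp only [dotProduct, Matrix.mulVec, Pi.star_apply, Matrix.map_apply,
        hxcdef, Complex.star_def, Complex.conj_ofReal]
      push_cast
      rfl
    -- step B
    have hB : star xc ⬝ᵥ (Fᴴ * SymS * F).mulVec xc = star z ⬝ᵥ SymS.mulVec z := by
      have e1 : (Fᴴ * SymS * F).mulVec xc = Fᴴ.mulVec ((SymS * F).mulVec xc) := by
        rw [Matrix.mulVec_mulVec, Matrix.mul_assoc]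
      have e2 : (SymS * F).mulVec xc = SymS.mulVec z := by
        rw [hzdef, Matrix.mulVec_mulVec]
      rw [e1, e2, Matrix.dotProduct_mulVec, ← Matrix.star_mulVec, ← hzdef]
    -- step C
    have hC : star z ⬝ᵥ SymS.mulVec z
        = ∑ k : Fin n, ((((d k + d (-k)) / 2) * Complex.normSq (z k) : ℝ) : ℂ) := by
      rw [hSymS]
      simp only [dotProduct, Matrix.mulVec_diagonal, Pi.star_apply, Complex.star_def]
      refine Finset.sum_congr rfl fun k _ => ?_
      have : (starRingEnd ℂ) (z k) * ((((d k + d (-k)) / 2 : ℝ) : ℂ) * z k)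
          = (((d k + d (-k)) / 2 : ℝ) : ℂ) * (z k * (starRingEnd ℂ) (z k)) := by ring
      rw [this, Complex.mul_conj]
      push_cast
      ring
    have hQ : ((x ⬝ᵥ T.mulVec x : ℝ) : ℂ)
        = ((∑ k : Fin n, ((d k + d (-k)) / 2) * Complex.normSq (z k) : ℝ) : ℂ) := by
      rw [← hA, ← hMap, hB, hC]
      push_cast
      refine Finset.sum_congr rfl fun k _ => ?_
      ring
    have hQr : x ⬝ᵥ T.mulVec x = ∑ k : Fin n, ((d k + d (-k)) / 2) * Complex.normSq (z k) :=
      Complex.ofReal_injective hQ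
    have hstar : star x = x := funext fun i => star_trivial _
    rw [hstar, hQr]
    obtain ⟨k0, hk0⟩ := Function.ne_iff.mp hz
    refine Finset.sum_pos' (fun k _ => mul_nonneg (le_of_lt (hpos k)) (Complex.normSq_nonneg _))
      ⟨k0, Finset.mem_univ _, ?_⟩
    exact mul_pos (hpos k0) (Complex.normSq_pos.mpr hk0)
  exact ⟨part1, part2, part3, part3.det_pos.ne'.isUnit⟩
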